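/- Let (Ω, 𝓕, P) be a probability space. Let X₁ and X₂ be real-valued random variables on Ω taking values in a countable set, and let Y₁ and Y₂ be independent real-valued random variables on a (possibly different) probability space. Suppose: (i) for every t ∈ ℝ, Pr[X₁ > t] ≤ Pr[Y₁ > t]; and (ii) for every x with Pr[X₁ = x] > 0 and every t ∈ ℝ, Pr[X₂ > t | X₁ = x] ≤ Pr[Y₂ > t]. Then for every t ∈ ℝ, Pr[X₁ + X₂ > t] ≤ Pr[Y₁ + Y₂ > t]; that is, X₁ + X₂ is stochastically dominated by Y₁ + Y₂. -/

import Mathlib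

open MeasureTheory Set

lemma aux_Ici_le (μ ν : Measure ℝ) [IsProbabilityMeasure μ] [IsProbabilityMeasure ν]
    (h : ∀ t : ℝ, μ (Ioi t) ≤ ν (Ioi t)) (c : ℝ) : μ (Ici c) ≤ ν (Ici c) := by
  have hIci : Ici c = ⋂ n : ℕ, Ioi (c - 1/(n+1)) := by
    ext x
    simp only [mem_Ici, mem_iInter, mem_Ioi]
    constructor
    · intro hx n
      have : (0:ℝ) < 1/(n+1) := by positivity
      linarith
    · intro hx
      by_contra hcx
      push_neg at hcx
      obtain ⟨n, hn⟩ := exists_nat_one_div_lt (show (0:ℝ) < c - x by linarith)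
      have := hx n
      linarith
  have hanti : Antitone (fun n : ℕ => Ioi (c - 1/(n+1))) := by
    intro m n hmn
    apply Ioi_subset_Ioi
    have : (1:ℝ)/(n+1) ≤ 1/(m+1) := by
      apply one_div_le_one_div_of_le <;> [positivity; exact_mod_cast by omega]
    linarith
  have hν : ν (Ici c) = ⨅ n : ℕ, ν (Ioi (c - 1/(n+1))) := by
    rw [hIci]
    exact hanti.measure_iInter (fun n => measurableSet_Ioi.nullMeasurableSet)
      ⟨0, measure_ne_top _ _⟩
  rw [hν]
  refine le_iInf fun n => le_trans ?_ (h _)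
  apply measure_mono
  intro x hx
  have : (0:ℝ) < 1/((n:ℝ)+1) := by positivity
  simp only [mem_Ici] at hx
  simp only [mem_Ioi]
  linarith

lemma aux_upper (μ ν : Measure ℝ) [IsProbabilityMeasure μ] [IsProbabilityMeasure ν]
    (h : ∀ t : ℝ, μ (Ioi t) ≤ ν (Ioi t)) {U : Set ℝ} (hU : IsUpperSet U) :
    μ U ≤ ν U := by
  rcases U.eq_empty_or_nonempty with rfl | hne
  · simp
  by_cases hbdd : BddBelow U
  · set c := sInf U with hc
    have hsub : Ioi c ⊆ U := fun x hx => by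
      obtain ⟨u, hu, hux⟩ := Real.lt_sInf_add_pos hne (show (0:ℝ) < x - c by exact sub_pos.mpr hx)
      exact hU (by linarith : u ≤ x) hu
    have hsup : U ⊆ Ici c := fun x hx => csInf_le hbdd hx
    by_cases hcU : c ∈ U
    · have : U = Ici c := subset_antisymm hsup (by
        intro x hx
        rcases eq_or_lt_of_le (mem_Ici.mp hx) with rfl | hlt
        · exact hcU
        · exact hsub hlt)
      rw [this]; exact aux_Ici_le μ ν h c
    · have : U = Ioi c := subset_antisymm
        (fun x hx => lt_of_le_of_ne (mem_Ici.mp (hsup hx)) (fun e => hcU (e ▸ hx))) hsub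
      rw [this]; exact h c
  · have : U = univ := by
      ext x; simp only [mem_univ, iff_true]
      by_contra hx
      exact hbdd ⟨x, fun u hu => le_of_not_gt (fun hlt => hx (hU hlt.le hu))⟩
    rw [this]; simp

lemma aux_lintegral_mono (μ ν : Measure ℝ) [IsProbabilityMeasure μ] [IsProbabilityMeasure ν]
    (h : ∀ t : ℝ, μ (Ioi t) ≤ ν (Ioi t)) (g : ℝ → ℝ) (hg : Monotone g) (hg0 : ∀ x, 0 ≤ g x) :
    ∫⁻ x, ENNReal.ofReal (g x) ∂μ ≤ ∫⁻ x, ENNReal.ofReal (g x) ∂ν := by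
  rw [lintegral_eq_lintegral_meas_lt μ (Filter.Eventually.of_forall hg0) hg.measurable.aemeasurable,
    lintegral_eq_lintegral_meas_lt ν (Filter.Eventually.of_forall hg0) hg.measurable.aemeasurable]
  refine lintegral_mono fun s => ?_
  exact aux_upper μ ν h (fun a b hab ha => lt_of_lt_of_le ha (hg hab))

theorem stmt16 {Ω Ω' : Type*} [MeasurableSpace Ω] [MeasurableSpace Ω']
    (P : Measure Ω) [IsProbabilityMeasure P] (P' : Measure Ω') [IsProbabilityMeasure P']
    (X₁ X₂ : Ω → ℝ) (hX₁ : Measurable X₁) (hX₂ : Measurable X₂)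
    (hc₁ : (Set.range X₁).Countable) (hc₂ : (Set.range X₂).Countable)
    (Y₁ Y₂ : Ω' → ℝ) (hY₁ : Measurable Y₁) (hY₂ : Measurable Y₂)
    (hindep : ProbabilityTheory.IndepFun Y₁ Y₂ P')
    (h1 : ∀ t : ℝ, (P {ω | t < X₁ ω}).toReal ≤ (P' {ω | t < Y₁ ω}).toReal)
    (h2 : ∀ x : ℝ, 0 < (P {ω | X₁ ω = x}).toReal → ∀ t : ℝ,
      (P {ω | t < X₂ ω ∧ X₁ ω = x}).toReal / (P {ω | X₁ ω = x}).toReal ≤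
        (P' {ω | t < Y₂ ω}).toReal) :
    ∀ t : ℝ, (P {ω | t < X₁ ω + X₂ ω}).toReal ≤ (P' {ω | t < Y₁ ω + Y₂ ω}).toReal := by
  intro t
  classical
  set S : Set ℝ := Set.range X₁ with hS
  haveI : Countable S := hc₁.to_subtype
  set μ : Measure ℝ := P.map X₁ with hμdef
  set ν : Measure ℝ := P'.map Y₁ with hνdef
  set μ₂ : Measure ℝ := P'.map Y₂ with hμ₂def
  haveI : IsProbabilityMeasure μ := Measure.isProbabilityMeasure_map hX₁.aemeasurable
  haveI : IsProbabilityMeasure ν := Measure.isProbabilityMeasure_map hY₁.aemeasurable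
  haveI : IsProbabilityMeasure μ₂ := Measure.isProbabilityMeasure_map hY₂.aemeasurable
  have hμx : ∀ x : ℝ, μ {x} = P {ω | X₁ ω = x} := fun x => by
    rw [hμdef, Measure.map_apply hX₁ (measurableSet_singleton x)]; rfl
  have hμ₂x : ∀ s : ℝ, μ₂ (Ioi s) = P' {ω | s < Y₂ ω} := fun s => by
    rw [hμ₂def, Measure.map_apply hY₂ measurableSet_Ioi]; rfl
  set g : ℝ → ℝ := fun x => (μ₂ (Ioi (t - x))).toReal with hgdef
  have hgmono : Monotone g := fun a b hab =>
    ENNReal.toReal_mono (measure_ne_top _ _) (measure_mono (Ioi_subset_Ioi (by linarith)))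
  have hg0 : ∀ x, 0 ≤ g x := fun x => ENNReal.toReal_nonneg
  have hgof : ∀ x, ENNReal.ofReal (g x) = μ₂ (Ioi (t - x)) := fun x =>
    ENNReal.ofReal_toReal (measure_ne_top _ _)
  set A : S → Set Ω := fun x => {ω | t - ↑x < X₂ ω ∧ X₁ ω = ↑x} with hAdef
  have hAm : ∀ x : S, MeasurableSet (A x) := fun x =>
    (measurableSet_lt measurable_const hX₂).inter (hX₁ (measurableSet_singleton _))
  have hdisj : Pairwise (Function.onFun Disjoint A) := by
    intro x y hxy
    apply Set.disjoint_left.mpr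
    rintro ω ⟨_, hx1⟩ ⟨_, hy1⟩
    exact hxy (Subtype.ext (hx1 ▸ hy1))
  have hunion : {ω | t < X₁ ω + X₂ ω} = ⋃ x : S, A x := by
    ext ω
    simp only [hAdef, Set.mem_setOf_eq, Set.mem_iUnion]
    constructor
    · intro hω
      exact ⟨⟨X₁ ω, Set.mem_range_self ω⟩, by simp; linarith, rfl⟩
    · rintro ⟨x, hlt, heq⟩
      rw [heq] at *
      linarith
  -- Step 1: decompose LHS
  have step1 : P {ω | t < X₁ ω + X₂ ω} = ∑' x : S, P (A x) := by
    rw [hunion, measure_iUnion hdisj hAm]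
  -- Step 2: bound each term
  have step2 : ∀ x : S, P (A x) ≤ ENNReal.ofReal (g ↑x) * μ {(x : ℝ)} := by
    intro x
    rw [hμx, hgof, hμ₂x]
    by_cases hp : P {ω | X₁ ω = (x : ℝ)} = 0
    · calc P (A x) ≤ P {ω | X₁ ω = (x : ℝ)} := measure_mono (fun ω hω => hω.2)
        _ = 0 := hp
        _ ≤ _ := zero_le
    · have hppos : 0 < (P {ω | X₁ ω = (x : ℝ)}).toReal :=
        ENNReal.toReal_pos hp (measure_ne_top _ _)
      have key := h2 (x : ℝ) hppos (t - ↑x)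
      rw [div_le_iff₀ hppos] at key
      rw [← ENNReal.toReal_le_toReal (measure_ne_top _ _)
        (ENNReal.mul_ne_top (measure_ne_top _ _) (measure_ne_top _ _)), ENNReal.toReal_mul]
      exact key
  -- Step 3: tsum equals lintegral over μ
  have hScompl : μ Sᶜ = 0 := by
    rw [hμdef, Measure.map_apply hX₁ hc₁.measurableSet.compl,
      show X₁ ⁻¹' Sᶜ = ∅ from Set.eq_empty_iff_forall_notMem.mpr
        (fun ω h => h (Set.mem_range_self ω)), measure_empty]
  have step3 : ∑' x : S, ENNReal.ofReal (g ↑x) * μ {(x : ℝ)} =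
      ∫⁻ x, ENNReal.ofReal (g x) ∂μ := by
    have hfull : ∫⁻ x, ENNReal.ofReal (g x) ∂μ = ∫⁻ x in S, ENNReal.ofReal (g x) ∂μ := by
      rw [← lintegral_add_compl (fun x => ENNReal.ofReal (g x)) hc₁.measurableSet (μ := μ),
        setLIntegral_measure_zero _ _ hScompl, add_zero]
    rw [hfull, lintegral_countable _ hc₁]
  -- Step 4: compare lintegrals
  have hμν : ∀ s : ℝ, μ (Ioi s) ≤ ν (Ioi s) := by
    intro s
    have hμs : μ (Ioi s) = P {ω | s < X₁ ω} := by
      rw [hμdef, Measure.map_apply hX₁ measurableSet_Ioi]; rfl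
    have hνs : ν (Ioi s) = P' {ω | s < Y₁ ω} := by
      rw [hνdef, Measure.map_apply hY₁ measurableSet_Ioi]; rfl
    rw [hμs, hνs]
    exact (ENNReal.toReal_le_toReal (measure_ne_top _ _) (measure_ne_top _ _)).mp (h1 s)
  have step4 : ∫⁻ x, ENNReal.ofReal (g x) ∂μ ≤ ∫⁻ x, ENNReal.ofReal (g x) ∂ν :=
    aux_lintegral_mono μ ν hμν g hgmono hg0
  -- Step 5: RHS
  have hsm : MeasurableSet {p : ℝ × ℝ | t < p.1 + p.2} :=
    measurableSet_lt measurable_const (measurable_fst.add measurable_snd)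
  have hmap : P'.map (fun ω => (Y₁ ω, Y₂ ω)) = ν.prod μ₂ :=
    (ProbabilityTheory.indepFun_iff_map_prod_eq_prod_map_map hY₁.aemeasurable
      hY₂.aemeasurable).mp hindep
  have step5 : P' {ω | t < Y₁ ω + Y₂ ω} = ∫⁻ x, ENNReal.ofReal (g x) ∂ν := by
    have h1' : P' {ω | t < Y₁ ω + Y₂ ω} = (ν.prod μ₂) {p : ℝ × ℝ | t < p.1 + p.2} := by
      rw [← hmap, Measure.map_apply (hY₁.prodMk hY₂) hsm]; rfl
    rw [h1', Measure.prod_apply hsm]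
    refine lintegral_congr fun x => ?_
    rw [hgof]
    congr 1
    ext z
    simp only [Set.mem_preimage, Set.mem_setOf_eq, Set.mem_Ioi]
    constructor <;> intro <;> linarith
  -- Assemble
  apply ENNReal.toReal_mono (measure_ne_top _ _)
  calc P {ω | t < X₁ ω + X₂ ω} = ∑' x : S, P (A x) := step1
    _ ≤ ∑' x : S, ENNReal.ofReal (g ↑x) * μ {(x : ℝ)} := ENNReal.tsum_le_tsum step2
    _ = ∫⁻ x, ENNReal.ofReal (g x) ∂μ := step3
    _ ≤ ∫⁻ x, ENNReal.ofReal (g x) ∂ν := step4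
    _ = P' {ω | t < Y₁ ω + Y₂ ω} := step5.symm
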